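/- For the Bernoulli measure μ_α on ℤ^ℕ with marginal distribution α, and a finitely supported permutation g of ℕ, the measure of the set of fixed points of g acting on ℤ^ℕ equals ∏_{n>1} (Σ_{v ∈ ℤ} α_v^n)^{c_n(g)}, where c_n(g) is the number of cycles of g of length n. -/

import Mathlib

open MeasureTheory

/-- The number of cycles (orbits) of length `n` of a permutation `g` of `ℕ`. -/
noncomputable def cycleCount (g : Equiv.Perm ℕ) (n : ℕ) : ℕ :=
  {O : Set ℕ | (∃ x : ℕ, O = Set.range fun k : ℤ => (g ^ k) x) ∧ O.ncard = n}.ncard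

namespace Stmt17

variable (g : Equiv.Perm ℕ)

def orb (x : ℕ) : Set ℕ := Set.range fun k : ℤ => (g ^ k) x

lemma self_mem_orb (x : ℕ) : x ∈ orb g x := ⟨0, rfl⟩

lemma apply_mem_orb (x : ℕ) : g x ∈ orb g x := ⟨1, by simp⟩

lemma inv_apply_mem_orb (x : ℕ) : g⁻¹ x ∈ orb g x := ⟨-1, by simp⟩

lemma orb_eq_of_mem {x y : ℕ} (h : y ∈ orb g x) : orb g y = orb g x := by
  obtain ⟨k, rfl⟩ := h
  ext z
  constructor <;> rintro ⟨m, rfl⟩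
  · exact ⟨m + k, by simp only []; rw [zpow_add]; rfl⟩
  · exact ⟨m - k, by simp only []; rw [← Equiv.Perm.mul_apply, ← zpow_add, sub_add_cancel]⟩

lemma mem_orb_symm {x y : ℕ} (h : y ∈ orb g x) : x ∈ orb g y := by
  rw [orb_eq_of_mem g h]; exact self_mem_orb g x

lemma orb_fixed {x : ℕ} (h : g x = x) : orb g x = {x} := by
  ext y
  simp only [orb, Set.mem_range, Set.mem_singleton_iff]
  constructor
  · rintro ⟨k, rfl⟩
    rw [Equiv.Perm.zpow_apply_eq_self_of_apply_eq_self h]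
  · rintro rfl; exact ⟨0, rfl⟩

lemma orb_subset_support {x : ℕ} (hx : g x ≠ x) : orb g x ⊆ {y | g y ≠ y} := by
  intro y hy hcon
  have h1 : x ∈ orb g y := mem_orb_symm g hy
  rw [orb_fixed g hcon] at h1
  exact hx (h1 ▸ hcon)

lemma orb_finite (hg : {x : ℕ | g x ≠ x}.Finite) (x : ℕ) : (orb g x).Finite := by
  by_cases h : g x = x
  · rw [orb_fixed g h]; exact Set.finite_singleton x
  · exact hg.subset (orb_subset_support g h)

lemma tsum_pi_fin : ∀ (ι : Type) [Finite ι] (β : ι → ℤ → ENNReal),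
    ∑' f : ι → ℤ, ∏ᶠ i, β i (f i) = ∏ᶠ i, ∑' v, β i v := by
  intro ι _
  refine Finite.induction_empty_option (P := fun γ => ∀ (β : γ → ℤ → ENNReal),
      ∑' f : γ → ℤ, ∏ᶠ i, β i (f i) = ∏ᶠ i, ∑' v, β i v) ?_ ?_ ?_ ι
  · intro γ δ e ih β
    have h1 : ∑' f : δ → ℤ, ∏ᶠ i, β i (f i)
        = ∑' h : γ → ℤ, ∏ᶠ i, β i ((Equiv.arrowCongr e (Equiv.refl ℤ)) h i) :=
      ((Equiv.arrowCongr e (Equiv.refl ℤ)).tsum_eq _).symm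
    rw [h1]
    have h2 : ∀ h : γ → ℤ, (∏ᶠ i : δ, β i ((Equiv.arrowCongr e (Equiv.refl ℤ)) h i))
        = ∏ᶠ j : γ, β (e j) (h j) := by
      intro h
      rw [← finprod_comp_equiv e (f := fun i => β i ((Equiv.arrowCongr e (Equiv.refl ℤ)) h i))]
      refine finprod_congr fun j => ?_
      simp [Equiv.arrowCongr]
    simp_rw [h2]
    rw [ih (fun j => β (e j))]
    exact finprod_comp_equiv e (f := fun i => ∑' v, β i v)
  · intro β
    have h1 : ∀ f : PEmpty → ℤ, (∏ᶠ i, β i (f i)) = 1 := fun f => finprod_of_isEmpty _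
    simp_rw [h1]
    rw [show (∏ᶠ i : PEmpty, ∑' v : ℤ, β i v) = 1 from finprod_of_isEmpty _]
    exact tsum_eq_single default fun b hb => absurd (Subsingleton.elim b default) hb
  · intro γ _ ih β
    classical
    set e : ℤ × (γ → ℤ) ≃ (Option γ → ℤ) := (Equiv.piOptionEquivProd (β := fun _ => ℤ)).symm with he
    rw [← e.tsum_eq, ENNReal.tsum_prod']
    have key : ∀ (v : ℤ) (h : γ → ℤ),
        (∏ᶠ i, β i (e (v, h) i)) = β none v * ∏ᶠ a, β (some a) (h a) := by
      intro v h
      rw [finprod_eq_prod_of_fintype, Fintype.prod_option, finprod_eq_prod_of_fintype]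
      congr 1
    simp_rw [key]
    rw [finprod_eq_prod_of_fintype, Fintype.prod_option, ← finprod_eq_prod_of_fintype]
    have h3 : ∀ v : ℤ, ∑' h : γ → ℤ, β none v * ∏ᶠ a, β (some a) (h a)
        = β none v * ∏ᶠ a, ∑' w, β (some a) w := by
      intro v
      rw [ENNReal.tsum_mul_left, ih]
    simp_rw [h3]
    rw [ENNReal.tsum_mul_right]

lemma tsum_pi (ι : Type) [Fintype ι] (β : ι → ℤ → ENNReal) :
    ∑' f : ι → ℤ, ∏ i, β i (f i) = ∏ i, ∑' v, β i v := by
  have := tsum_pi_fin ι β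
  simp_rw [finprod_eq_prod_of_fintype] at this
  exact this

end Stmt17

/-- For the Bernoulli measure `μ_α` on `ℤ^ℕ` with marginal `α` and a finitely
supported permutation `g` of `ℕ`, the measure of the set of fixed points of `g`
acting on `ℤ^ℕ` equals `∏_{n>1} p_n(α)^{c_n(g)}`, where `p_n(α) = ∑_v α_v^n` is the
Newton power sum and `c_n(g)` is the number of cycles of `g` of length `n`. -/
theorem stmt17 (α : ℤ → ENNReal) (hα : ∑' v : ℤ, α v = 1)
    (μ : Measure (ℕ → ℤ)) [IsProbabilityMeasure μ]
    (hcyl : ∀ (s : Finset ℕ) (f : ℕ → ℤ),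
      μ {x : ℕ → ℤ | ∀ i ∈ s, x i = f i} = ∏ i ∈ s, α (f i))
    (g : Equiv.Perm ℕ) (hg : {x : ℕ | g x ≠ x}.Finite) :
    μ {x : ℕ → ℤ | (fun n => x (g⁻¹ n)) = x} =
      ∏ᶠ (n : ℕ) (_ : 2 ≤ n), (∑' v : ℤ, α v ^ n) ^ cycleCount g n := by
  classical
  set S : Finset ℕ := hg.toFinset with hSdef
  have hmemS : ∀ {x : ℕ}, x ∈ S ↔ g x ≠ x := fun {x} => hg.mem_toFinset
  set r : ℕ → ℕ := fun x => sInf (Stmt17.orb g x) with hrdef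
  have hrmem : ∀ x, r x ∈ Stmt17.orb g x :=
    fun x => Nat.sInf_mem ⟨x, Stmt17.self_mem_orb g x⟩
  have hreq : ∀ {x y : ℕ}, y ∈ Stmt17.orb g x → r y = r x := by
    intro x y h
    simp only [hrdef, Stmt17.orb_eq_of_mem g h]
  have hrr : ∀ x, r (r x) = r x := fun x => hreq (hrmem x)
  have horbS : ∀ {x : ℕ}, x ∈ S → Stmt17.orb g x ⊆ ↑S := by
    intro x hx y hy
    have := Stmt17.orb_subset_support g (hmemS.mp hx) hy
    simpa [hSdef] using this
  have hrS : ∀ {x : ℕ}, x ∈ S → r x ∈ S := fun {x} hx => horbS hx (hrmem x)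
  set R : Finset ℕ := S.image r with hRdef
  have hRS : ∀ {s : ℕ}, s ∈ R → s ∈ S := by
    intro s hs
    obtain ⟨i, hi, rfl⟩ := Finset.mem_image.mp hs
    exact hrS hi
  have hrfix : ∀ {s : ℕ}, s ∈ R → r s = s := by
    intro s hs
    obtain ⟨i, hi, rfl⟩ := Finset.mem_image.mp hs
    exact hrr i
  set m : ℕ → ℕ := fun s => (S.filter fun i => r i = s).card with hmdef
  have horbfin := Stmt17.orb_finite g hg
  have hfiber : ∀ {s : ℕ}, s ∈ R → (S.filter fun i => r i = s) = (horbfin s).toFinset := by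
    intro s hs
    ext i
    simp only [Finset.mem_filter, Set.Finite.mem_toFinset]
    constructor
    · rintro ⟨hiS, hri⟩
      exact Stmt17.mem_orb_symm g (hri ▸ hrmem i)
    · intro hio
      exact ⟨horbS (hRS hs) hio, (hreq hio).trans (hrfix hs)⟩
  have hmncard : ∀ {s : ℕ}, s ∈ R → m s = (Stmt17.orb g s).ncard := by
    intro s hs
    rw [hmdef]
    simp only [hfiber hs]
    exact (Set.ncard_eq_toFinset_card _ (horbfin s)).symm
  have h2m : ∀ {s : ℕ}, s ∈ R → 2 ≤ m s := by
    intro s hs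
    rw [hmncard hs]
    have : 1 < (Stmt17.orb g s).ncard := by
      rw [Set.one_lt_ncard (horbfin s)]
      exact ⟨g s, Stmt17.apply_mem_orb g s, s, Stmt17.self_mem_orb g s, hmemS.mp (hRS hs)⟩
    omega
  -- the event
  set E : Set (ℕ → ℤ) := {x : ℕ → ℤ | (fun n => x (g⁻¹ n)) = x} with hEdef
  have hEmem : ∀ x : ℕ → ℤ, x ∈ E ↔ ∀ n, x (g⁻¹ n) = x n := by
    intro x; simp only [hEdef, Set.mem_setOf_eq, funext_iff]
  have hEc : ∀ x ∈ E, ∀ (k : ℤ) (i : ℕ), x ((g ^ k) i) = x i := by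
    intro x hx
    rw [hEmem] at hx
    have hgap : ∀ n, x (g n) = x n := by
      intro n
      have := hx (g n)
      rw [← Equiv.Perm.mul_apply, inv_mul_cancel, Equiv.Perm.one_apply] at this
      exact this.symm
    intro k
    induction k using Int.induction_on with
    | zero => simp
    | succ k ih =>
        intro i
        have : (g ^ ((k : ℤ) + 1)) i = (g ^ (k : ℤ)) (g i) := by
          rw [zpow_add_one, ← Equiv.Perm.mul_apply]
        rw [this, ih (g i), hgap i]
    | pred k ih =>
        intro i
        have : (g ^ (-(k : ℤ) - 1)) i = (g ^ (-(k : ℤ))) (g⁻¹ i) := by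
          rw [zpow_sub_one, Equiv.Perm.mul_apply]
        rw [this, ih (g⁻¹ i), hx i]
  have hEchar : ∀ x : ℕ → ℤ, x ∈ E ↔ ∀ i ∈ S, x i = x (r i) := by
    intro x
    constructor
    · intro hx i _
      obtain ⟨k, hk⟩ := hrmem i
      rw [← hk, hEc x hx k i]
    · intro h
      rw [hEmem]
      intro n
      by_cases hn : g n = n
      · have : g⁻¹ n = n := by conv_lhs => rw [← hn, ← Equiv.Perm.mul_apply, inv_mul_cancel, Equiv.Perm.one_apply]
        rw [this]
      · have hnS : n ∈ S := hmemS.mpr hn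
        have hinvS : g⁻¹ n ∈ S := by
          rw [hmemS, ← Equiv.Perm.mul_apply, mul_inv_cancel, Equiv.Perm.one_apply]
          intro hcon
          exact hn (by conv_lhs => rw [hcon, ← Equiv.Perm.mul_apply, mul_inv_cancel, Equiv.Perm.one_apply])
        have hmemorb : g⁻¹ n ∈ Stmt17.orb g n := Stmt17.inv_apply_mem_orb g n
        rw [h _ hinvS, hreq hmemorb, ← h n hnS]
  -- cylinders
  set F : (↥R → ℤ) → ℕ → ℤ := fun f i => if h : r i ∈ R then f ⟨r i, h⟩ else 0 with hFdef
  set C : (↥R → ℤ) → Set (ℕ → ℤ) := fun f => {x | ∀ i ∈ S, x i = F f i} with hCdef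
  have hFfs : ∀ (f : ↥R → ℤ) (s : ↥R), F f ↑s = f s := by
    intro f s
    have hrs : r ↑s = ↑s := hrfix s.2
    simp only [hFdef, hrs, dif_pos s.2, Subtype.coe_eta]
  have hEun : E = ⋃ f : ↥R → ℤ, C f := by
    ext x
    simp only [Set.mem_iUnion, hCdef, Set.mem_setOf_eq]
    rw [hEchar x]
    constructor
    · intro h
      refine ⟨fun s => x ↑s, fun i hi => ?_⟩
      have hri : r i ∈ R := Finset.mem_image_of_mem r hi
      rw [hFdef]
      simp only [dif_pos hri]
      exact h i hi
    · rintro ⟨f, hf⟩ i hi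
      have hri : r i ∈ R := Finset.mem_image_of_mem r hi
      have h1 := hf i hi
      have h2 := hf (r i) (hrS hi)
      rw [h1, h2, hFfs f ⟨r i, hri⟩]
      rw [hFdef]
      simp only [dif_pos hri]
  have hdisj : Pairwise (Function.onFun Disjoint C) := by
    intro f f' hne
    rw [Function.onFun, Set.disjoint_left]
    intro x hxf hxf'
    apply hne
    funext s
    have hsS : (s : ℕ) ∈ S := hRS s.2
    have e1 : x ↑s = F f ↑s := hxf ↑s hsS
    have e2 : x ↑s = F f' ↑s := hxf' ↑s hsS
    rw [hFfs f s] at e1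
    rw [hFfs f' s] at e2
    rw [← e1, ← e2]
  have hmeas : ∀ f : ↥R → ℤ, MeasurableSet (C f) := by
    intro f
    have : C f = ⋂ i ∈ S, {x : ℕ → ℤ | x i = F f i} := by
      ext x; simp [hCdef]
    rw [this]
    refine MeasurableSet.biInter (Finset.countable_toSet S) fun i _ => ?_
    show MeasurableSet ((fun x : ℕ → ℤ => x i) ⁻¹' {F f i})
    exact measurable_pi_apply i (measurableSet_singleton (F f i))
  have hμC : ∀ f : ↥R → ℤ, μ (C f) = ∏ i ∈ S, α (F f i) := fun f => hcyl S (F f)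
  -- the product over S refactored by fibers
  have hprodS : ∀ f : ↥R → ℤ, (∏ i ∈ S, α (F f i)) = ∏ s ∈ R, α (F f s) ^ m s := by
    intro f
    rw [← Finset.prod_fiberwise_of_maps_to (g := r) (t := R)
      (fun i hi => Finset.mem_image_of_mem r hi) (fun i => α (F f i))]
    refine Finset.prod_congr rfl fun s hs => ?_
    have : ∀ i ∈ S.filter fun i => r i = s, α (F f i) = α (F f s) := by
      intro i hi
      obtain ⟨hiS, hri⟩ := Finset.mem_filter.mp hi
      rw [hFdef]
      simp only [hri, hrfix hs]
    rw [Finset.prod_congr rfl this, Finset.prod_const, hmdef]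
  -- main computation
  have step1 : μ E = ∑' f : ↥R → ℤ, μ (C f) := by
    rw [hEun]
    exact measure_iUnion hdisj hmeas
  have step2 : μ E = ∑' f : ↥R → ℤ, ∏ s : ↥R, α (f s) ^ m ↑s := by
    rw [step1]
    refine tsum_congr fun f => ?_
    rw [hμC f, hprodS f, ← Finset.prod_attach R (fun s => α (F f s) ^ m s)]
    rw [Finset.univ_eq_attach]
    refine Finset.prod_congr rfl fun s _ => ?_
    rw [hFfs f s]
  have step3 : μ E = ∏ s ∈ R, ∑' v : ℤ, α v ^ m s := by
    rw [step2, Stmt17.tsum_pi ↥R (fun s v => α v ^ m ↑s)]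
    rw [Finset.univ_eq_attach, Finset.prod_attach R (fun s => ∑' v : ℤ, α v ^ m s)]
  -- counting cycles
  have hcc : ∀ n : ℕ, 2 ≤ n → cycleCount g n = (R.filter fun s => m s = n).card := by
    intro n hn
    have hset : {O : Set ℕ | (∃ x : ℕ, O = Set.range fun k : ℤ => (g ^ k) x) ∧ O.ncard = n}
        = Stmt17.orb g '' ↑(R.filter fun s => m s = n) := by
      ext O
      simp only [Set.mem_setOf_eq, Set.mem_image, Finset.coe_filter, Set.mem_setOf_eq,
        Finset.mem_coe]
      constructor
      · rintro ⟨⟨x, rfl⟩, hn'⟩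
        have hgx : g x ≠ x := by
          intro hcon
          have : (Stmt17.orb g x).ncard = 1 := by
            rw [Stmt17.orb_fixed g hcon, Set.ncard_singleton]
          change (Stmt17.orb g x).ncard = n at hn'
          omega
        have hxS : x ∈ S := hmemS.mpr hgx
        have hrx : r x ∈ R := Finset.mem_image_of_mem r hxS
        have horb : Stmt17.orb g (r x) = Stmt17.orb g x := Stmt17.orb_eq_of_mem g (hrmem x)
        refine ⟨r x, ⟨hrx, ?_⟩, horb⟩
        rw [hmncard hrx, horb]
        exact hn'
      · rintro ⟨s, ⟨hsR, hms⟩, rfl⟩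
        exact ⟨⟨s, rfl⟩, by rw [← hmncard hsR]; exact hms⟩
    rw [cycleCount, hset, Set.ncard_image_of_injOn, Set.ncard_coe_finset]
    intro s hs s' hs' horb
    simp only [Finset.coe_filter, Set.mem_setOf_eq] at hs hs'
    have h1 : s = r s := (hrfix hs.1).symm
    have h2 : s' = r s' := (hrfix hs'.1).symm
    rw [h1, h2, hrdef]
    simp only [horb]
  have himage2 : ∀ n ∈ R.image m, 2 ≤ n := by
    intro n hn
    obtain ⟨s, hs, rfl⟩ := Finset.mem_image.mp hn
    exact h2m hs
  have step4 : (∏ s ∈ R, ∑' v : ℤ, α v ^ m s)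
      = ∏ n ∈ R.image m, (∑' v : ℤ, α v ^ n) ^ (R.filter fun s => m s = n).card := by
    rw [← Finset.prod_fiberwise_of_maps_to' (g := m) (t := R.image m)
      (fun s hs => Finset.mem_image_of_mem m hs) (fun n => ∑' v : ℤ, α v ^ n)]
    refine Finset.prod_congr rfl fun n _ => ?_
    rw [Finset.prod_const]
  -- finprod
  have hfp : (∏ᶠ (n : ℕ) (_ : 2 ≤ n), (∑' v : ℤ, α v ^ n) ^ cycleCount g n)
      = ∏ n ∈ R.image m, (∑' v : ℤ, α v ^ n) ^ cycleCount g n := by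
    have h1 : (∏ᶠ (n : ℕ) (_ : 2 ≤ n), (∑' v : ℤ, α v ^ n) ^ cycleCount g n)
        = ∏ᶠ n : ℕ, if 2 ≤ n then (∑' v : ℤ, α v ^ n) ^ cycleCount g n else 1 := by
      refine finprod_congr fun n => ?_
      exact finprod_eq_if (M := ENNReal)
    have h2 : (∏ᶠ n : ℕ, if 2 ≤ n then (∑' v : ℤ, α v ^ n) ^ cycleCount g n else 1)
        = ∏ n ∈ R.image m, if 2 ≤ n then (∑' v : ℤ, α v ^ n) ^ cycleCount g n else 1 := by
      refine finprod_eq_prod_of_mulSupport_subset _ ?_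
      intro n hn
      simp only [Function.mem_mulSupport] at hn
      by_cases h2 : 2 ≤ n
      · rw [if_pos h2] at hn
        by_contra hnot
        apply hn
        have he : (R.filter fun s => m s = n) = ∅ := by
          rw [Finset.filter_eq_empty_iff]
          intro s hs hcon
          exact hnot (by simp only [Finset.coe_image, Set.mem_image, Finset.mem_coe]
                        ; exact ⟨s, hs, hcon⟩)
        rw [hcc n h2, he, Finset.card_empty, pow_zero]
      · rw [if_neg h2] at hn
        exact absurd rfl hn
    rw [h1, h2]
    exact Finset.prod_congr rfl fun n hn => if_pos (himage2 n hn)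
  rw [show μ {x : ℕ → ℤ | (fun n => x (g⁻¹ n)) = x} = μ E from rfl, step3, step4, hfp]
  refine Finset.prod_congr rfl fun n hn => ?_
  rw [hcc n (himage2 n hn)]
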